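/- Let S₀ ⊆ S be linear subspaces of ℝ^p and let f : ℝ^s → ℝ be a Borel function with f∘Y P-integrable. If E[f∘Y | σ(X)] = E[f∘Y | σ(P_{S₀}∘X)] P-almost everywhere, then E[f∘Y | σ(P_S∘X)] = E[f∘Y | σ(X)] P-almost everywhere; that is, any subspace containing a mean dimension reduction subspace for f is itself a mean dimension reduction subspace for f. -/

import Mathlib

open MeasureTheory ProbabilityTheory Filter

/-- The map `x ↦ P_S x`, the orthogonal projection onto `S` viewed as a map of the
ambient Euclidean space. -/
noncomputable def projFn {p : ℕ} (S : Submodule ℝ (EuclideanSpace ℝ (Fin p))) :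
    EuclideanSpace ℝ (Fin p) → EuclideanSpace ℝ (Fin p) :=
  fun v => (S.orthogonalProjectionOnto v : EuclideanSpace ℝ (Fin p))

/-- The σ-algebra `σ(P_S ∘ X)` generated by the projected random vector. -/
noncomputable def sigmaProj {Ω : Type*} {p : ℕ}
    (S : Submodule ℝ (EuclideanSpace ℝ (Fin p))) (X : Ω → EuclideanSpace ℝ (Fin p)) :
    MeasurableSpace Ω :=
  MeasurableSpace.comap (fun ω => projFn S (X ω)) inferInstance

lemma sigmaProj_le {Ω : Type*} {p : ℕ} [mΩ : MeasurableSpace Ω]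
    (S : Submodule ℝ (EuclideanSpace ℝ (Fin p))) {X : Ω → EuclideanSpace ℝ (Fin p)}
    (hX : Measurable X) : sigmaProj S X ≤ mΩ := by
  have h : Measurable (fun ω => projFn S (X ω)) := by
    have : Measurable (projFn S) :=
      (S.subtypeL.comp S.orthogonalProjectionOnto).continuous.measurable
    exact this.comp hX
  exact h.comap_le


/-- Any subspace containing a mean dimension reduction subspace for `f` is itself a mean
dimension reduction subspace for `f`. -/
theorem isMeanDRS_of_le
    {Ω : Type*} {p s : ℕ} [mΩ : MeasurableSpace Ω] (P : Measure Ω) [IsProbabilityMeasure P]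
    (X : Ω → EuclideanSpace ℝ (Fin p)) (Y : Ω → EuclideanSpace ℝ (Fin s))
    (hX : Measurable X) (hY : Measurable Y)
    (S₀ S : Submodule ℝ (EuclideanSpace ℝ (Fin p))) (hle : S₀ ≤ S)
    (f : EuclideanSpace ℝ (Fin s) → ℝ) (hf : Measurable f)
    (hint : Integrable (fun ω => f (Y ω)) P)
    (h0 : P[(fun ω => f (Y ω))|MeasurableSpace.comap X inferInstance]
      =ᵐ[P] P[(fun ω => f (Y ω))|sigmaProj S₀ X]) :
    P[(fun ω => f (Y ω))|sigmaProj S X]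
      =ᵐ[P] P[(fun ω => f (Y ω))|MeasurableSpace.comap X inferInstance] := by
  -- σ-algebra inclusions
  have hS : sigmaProj S X ≤ mΩ := sigmaProj_le S hX
  have hX' : MeasurableSpace.comap X inferInstance ≤ mΩ := hX.comap_le
  have hSX : sigmaProj S X ≤ MeasurableSpace.comap X inferInstance := by
    have hmeas : Measurable (projFn S) :=
      (S.subtypeL.comp S.orthogonalProjectionOnto).continuous.measurable
    rw [sigmaProj, show (fun ω => projFn S (X ω)) = projFn S ∘ X from rfl,
      ← MeasurableSpace.comap_comp]
    exact MeasurableSpace.comap_mono hmeas.comap_le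
  have hS0S : sigmaProj S₀ X ≤ sigmaProj S X := by
    have hkey : (fun ω => projFn S₀ (X ω)) = projFn S₀ ∘ (fun ω => projFn S (X ω)) := by
      funext ω
      simp only [Function.comp, projFn]
      rw [← Submodule.starProjection_apply S, Submodule.orthogonalProjectionOnto_starProjection_of_le hle]
    have hmeas : Measurable (projFn S₀) :=
      (S₀.subtypeL.comp S₀.orthogonalProjectionOnto).continuous.measurable
    rw [sigmaProj, hkey, ← MeasurableSpace.comap_comp]
    exact MeasurableSpace.comap_mono hmeas.comap_le
  haveI : IsFiniteMeasure (P.trim hS) := isFiniteMeasure_trim hS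
  -- tower property
  have h1 : P[(fun ω => f (Y ω))|sigmaProj S X]
      =ᵐ[P] P[P[(fun ω => f (Y ω))|MeasurableSpace.comap X inferInstance]|sigmaProj S X] :=
    (condExp_condExp_of_le hSX hX').symm
  have h2 : P[P[(fun ω => f (Y ω))|MeasurableSpace.comap X inferInstance]|sigmaProj S X]
      =ᵐ[P] P[P[(fun ω => f (Y ω))|sigmaProj S₀ X]|sigmaProj S X] :=
    condExp_congr_ae h0
  have h3 : P[P[(fun ω => f (Y ω))|sigmaProj S₀ X]|sigmaProj S X]
      =ᵐ[P] P[(fun ω => f (Y ω))|sigmaProj S₀ X] := by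
    rw [condExp_of_stronglyMeasurable (μ := P) hS
      (stronglyMeasurable_condExp.mono hS0S) integrable_condExp]
  exact h1.trans (h2.trans (h3.trans h0.symm))
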